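/- Suppose U is an idempotent ultrafilter on (ℕ,+) and 𝔸_U contains an idempotent (some μ with μˆμ = μ). Then there exist idempotents μ_r ∈ 𝔸_U for each r ∈ 2^ℕ and sets E_r ⊆ 𝕋 for each r ∈ 2^ℕ such that μ_r(E_s) = 1 if r = s and μ_r(E_s) = 0 if r ≠ s. In particular, the set of idempotents in 𝔸_U is either empty or is not weak*-closed. -/

import Mathlib

open scoped Classical

/-- The free binary system (free magma) on one generator. -/
abbrev 𝕋 : Type := FreeMagma Unit

/-- The generator `1` of `𝕋`. -/
def e1 : 𝕋 := FreeMagma.of ()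

/-- `#(t)`: the number of occurrences of the generator in `t`. -/
def cnt : 𝕋 → ℕ
  | FreeMagma.of _ => 1
  | FreeMagma.mul a b => cnt a + cnt b

/-- The space `ℓ^∞(S)` of bounded real-valued functions on `S`. -/
def Bdd (S : Type*) : Type _ := {f : S → ℝ // ∃ M, ∀ s, |f s| ≤ M}

/-- Package a function as an element of `Bdd S` (junk value if unbounded). -/
noncomputable def liftBdd {S : Type*} (g : S → ℝ) : Bdd S :=
  if h : ∃ M, ∀ s, |g s| ≤ M then ⟨g, h⟩ else ⟨fun _ => 0, 0, fun _ => by simp⟩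

/-- The constant function as an element of `Bdd S`. -/
def constB (S : Type*) (c : ℝ) : Bdd S := ⟨fun _ => c, |c|, fun _ => le_rfl⟩

/-- The characteristic function of `E` as an element of `Bdd S`. -/
noncomputable def indB {S : Type*} (E : Set S) : Bdd S :=
  liftBdd (fun s => if s ∈ E then 1 else 0)

/-- `Pr S`: finitely additive probability measures on `S`, identified with the
positive normalized linear functionals on `ℓ^∞(S)`.  The weak* topology is the
subspace topology inherited from the product topology on `Bdd S → ℝ`. -/
def PrSet (S : Type*) : Set (Bdd S → ℝ) :=
  {φ | (∀ f g h : Bdd S, (∀ s, h.1 s = f.1 s + g.1 s) → φ h = φ f + φ g) ∧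
       (∀ (c : ℝ) (f g : Bdd S), (∀ s, g.1 s = c * f.1 s) → φ g = c * φ f) ∧
       (∀ f : Bdd S, (∀ s, 0 ≤ f.1 s) → 0 ≤ φ f) ∧
       φ (constB S 1) = 1}

/-- `μ(E)`: the measure of a set `E ⊆ S`. -/
noncomputable def mE {S : Type*} (φ : Bdd S → ℝ) (E : Set S) : ℝ := φ (indB E)

/-- The product `μ ⊗ ν` of finitely additive measures:
`μ⊗ν(f) = μ(x ↦ ν(y ↦ f(x,y)))`. -/
noncomputable def prodM {S T : Type*} (φ : Bdd S → ℝ) (ψ : Bdd T → ℝ) :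
    Bdd (S × T) → ℝ :=
  fun f => φ (liftBdd fun x => ψ (liftBdd fun y => f.1 (x, y)))

/-- The extension of a binary operation `op` on `S` to `Pr S`:
`μ⋆ν(f) = μ(x ↦ ν(y ↦ f(x ⋆ y)))`. -/
noncomputable def starM {S : Type*} (op : S → S → S) (φ ψ : Bdd S → ℝ) :
    Bdd S → ℝ :=
  fun f => φ (liftBdd fun x => ψ (liftBdd fun y => f.1 (op x y)))

/-- The extension of `ˆ` to `Pr 𝕋`. -/
noncomputable def hmul (φ ψ : Bdd 𝕋 → ℝ) : Bdd 𝕋 → ℝ := starM (· * ·) φ ψ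

/-- Finitely supported probability measures: finite convex combinations of
point evaluations. -/
def FinSuppPr (S : Type*) : Set (Bdd S → ℝ) :=
  {φ | ∃ (F : Finset S) (w : S → ℝ), (∀ s ∈ F, 0 ≤ w s) ∧ (∑ s ∈ F, w s) = 1 ∧
      ∀ f : Bdd S, φ f = ∑ s ∈ F, w s * f.1 s}

/-- `𝔸_n`: finitely supported probability measures concentrated on `𝕋_n`. -/
def Asets (n : ℕ) : Set (Bdd 𝕋 → ℝ) :=
  {φ | ∃ (F : Finset 𝕋) (w : 𝕋 → ℝ), (∀ t ∈ F, cnt t = n) ∧ (∀ t ∈ F, 0 ≤ w t) ∧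
      (∑ t ∈ F, w t) = 1 ∧ ∀ f : Bdd 𝕋, φ f = ∑ t ∈ F, w t * f.1 t}

/-- The extension of `+` on `ℕ` to ultrafilters: `A ∈ U+V` iff
`{m : {n : m+n ∈ A} ∈ V} ∈ U`. -/
noncomputable def addU (U V : Ultrafilter ℕ) : Ultrafilter ℕ :=
  U.bind fun m => V.map fun n => m + n

/-- `𝔸_U`: the `U`-limit of the sets `𝔸_m`. -/
def AU (U : Ultrafilter ℕ) : Set (Bdd 𝕋 → ℝ) :=
  {μ | μ ∈ PrSet 𝕋 ∧ ∀ W : Set (Bdd 𝕋 → ℝ), IsOpen W → μ ∈ W →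
      {m : ℕ | (W ∩ Asets m).Nonempty} ∈ U}

/-- The extension of `ˆ` to ultrafilters on `𝕋`: `E ∈ UˆV` iff
`{u : {v : uˆv ∈ E} ∈ V} ∈ U`. -/
noncomputable def umul (U V : Ultrafilter 𝕋) : Ultrafilter 𝕋 :=
  U.bind fun u => V.map fun v => u * v

/-- Substitution of measures into a term `t`:
`t(μ_0,…,μ_{m-1})(f)` is the nested integral
`μ_0(x_0 ↦ ⋯ μ_{m-1}(x_{m-1} ↦ f(t(x⃗)))⋯)`. -/
noncomputable def substM : 𝕋 → List (Bdd 𝕋 → ℝ) → (Bdd 𝕋 → ℝ)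
  | FreeMagma.of _, μs => μs.headI
  | FreeMagma.mul a b, μs =>
      hmul (substM a (μs.take (cnt a))) (substM b (μs.drop (cnt a)))

/-- `t_k`: iteratively remove the carets of `t` involving only leaves of index
greater than `k`. -/
def tk : 𝕋 → ℕ → 𝕋
  | FreeMagma.of _, _ => e1
  | FreeMagma.mul a b, k => if k < cnt a then tk a k * e1 else a * tk b (k - cnt a)

/-- `l_k(t) = #(t_k) - 2` (truncated subtraction). -/
def lk (t : 𝕋) (k : ℕ) : ℕ := cnt (tk t k) - 2

/-- The subterm `t/σ` of `t` at address `σ` (`false` = left/`0`, `true` = right/`1`). -/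
def subT : 𝕋 → List Bool → Option 𝕋
  | t, [] => some t
  | FreeMagma.of _, _ :: _ => none
  | FreeMagma.mul a b, c :: σ => if c then subT b σ else subT a σ

/-- `σ <_lex ς` for incompatible binary sequences: at the first coordinate where
they differ, `σ` has `0` and `ς` has `1`. -/
def lexLT (σ ς : List Bool) : Prop :=
  ∃ p σ' ς', σ = p ++ (false :: σ') ∧ ς = p ++ (true :: ς')

/-- `x₀·E`. -/
def x0E (E : Set 𝕋) : Set 𝕋 :=
  {x | ∃ a b c : 𝕋, x = a * (b * c) ∧ (a * b) * c ∈ E}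

/-- `x₁·E`. -/
def x1E (E : Set 𝕋) : Set 𝕋 :=
  {x | ∃ s a b c : 𝕋, x = s * (a * (b * c)) ∧ s * ((a * b) * c) ∈ E}

/-- `u_σ` for a nonempty finite binary sequence `σ`. -/
def uSeq : List Bool → 𝕋
  | [] => e1
  | [_] => e1
  | b :: σ => if b then e1 * uSeq σ else uSeq σ * e1

/-- `a ≪ b`: for some `p`, `#(a) < 2^p` and `2^p` divides `#(b)`. -/
def ll (a b : 𝕋) : Prop := ∃ p : ℕ, cnt a < 2 ^ p ∧ 2 ^ p ∣ cnt b

/-- `r↾n`: the first `n` values of `r` as a finite binary sequence. -/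
def rList (r : ℕ → Bool) (n : ℕ) : List Bool := (List.range n).map r

/-- The map `h_r : 𝕋 → 𝕋`. -/
noncomputable def hr (r : ℕ → Bool) : 𝕋 → 𝕋
  | FreeMagma.of _ => uSeq (rList r 1)
  | FreeMagma.mul a b =>
      if ll a b then hr r a * hr r b else uSeq (rList r (cnt a + cnt b))

/-- The action of `h_r` on measures: `h_r(μ)(f) = μ(f ∘ h_r)`. -/
noncomputable def hrM (r : ℕ → Bool) (φ : Bdd 𝕋 → ℝ) : Bdd 𝕋 → ℝ :=
  fun f => φ (liftBdd fun t => f.1 (hr r t))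

/-- `lev`: `l(1) = 0`, `l(aˆb) = l(a) + 1`. -/
def lev : 𝕋 → ℕ
  | FreeMagma.of _ => 0
  | FreeMagma.mul a _ => lev a + 1

/-- `C` is closed under `ˆ`. -/
def HClosed (C : Set (Bdd 𝕋 → ℝ)) : Prop := ∀ μ ∈ C, ∀ ν ∈ C, hmul μ ν ∈ C
/-! ### Auxiliary development -/

section AuxiliaryCombinatorics

lemma cnt_pos : ∀ t : 𝕋, 1 ≤ cnt t
  | FreeMagma.of _ => le_refl 1
  | FreeMagma.mul a b => le_trans (cnt_pos a) (Nat.le_add_right _ _)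

lemma cnt_mul' (a b : 𝕋) : cnt (a * b) = cnt a + cnt b := rfl

lemma cnt_e1' : cnt e1 = 1 := rfl

lemma magma_mul_inj {a b c d : 𝕋} (h : a * b = c * d) : a = c ∧ b = d := by
  have h' : FreeMagma.mul a b = FreeMagma.mul c d := h
  injection h' with h1 h2
  exact ⟨h1, h2⟩

lemma uSeq_cons₂ (b c : Bool) (l : List Bool) :
    uSeq (b :: c :: l) = if b then e1 * uSeq (c :: l) else uSeq (c :: l) * e1 := rfl

lemma cnt_uSeq : ∀ σ : List Bool, 1 ≤ σ.length → cnt (uSeq σ) = σ.length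
  | [_], _ => rfl
  | b :: c :: l, _ => by
    have ih := cnt_uSeq (c :: l) (by simp)
    cases b <;> simp [uSeq_cons₂, cnt_mul', cnt_e1', ih] <;> omega

lemma rList_length (r : ℕ → Bool) (n : ℕ) : (rList r n).length = n := by
  simp [rList]

lemma rList_one (r : ℕ → Bool) : rList r 1 = [r 0] := by
  simp [rList, List.range_succ]

lemma rList_congr {r s : ℕ → Bool} {n : ℕ} (h : ∀ i, i < n → r i = s i) :
    rList r n = rList s n := by
  unfold rList
  apply List.map_congr_left
  intro i hi
  exact h i (List.mem_range.mp hi)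

lemma rList_getD {r : ℕ → Bool} {L k : ℕ} (hk : k < L) :
    (rList r L).getD k false = r k := by
  simp [rList, List.getD_eq_getElem?_getD, List.getElem?_map, List.getElem?_range, hk]

lemma uSeq_ne_e1 {σ : List Bool} (h : 2 ≤ σ.length) : uSeq σ ≠ e1 := by
  intro he
  have h1 := cnt_uSeq σ (by omega)
  rw [he, cnt_e1'] at h1
  omega

lemma uSeq_cons_inj {a b : Bool} {l1 l2 : List Bool} (hlen : l1.length = l2.length)
    (h2 : 2 ≤ l1.length) (h : uSeq (a :: l1) = uSeq (b :: l2)) :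
    a = b ∧ uSeq l1 = uSeq l2 := by
  obtain ⟨c, l, rfl⟩ : ∃ c l, l1 = c :: l := by
    cases l1 with
    | nil => simp at h2
    | cons c l => exact ⟨c, l, rfl⟩
  obtain ⟨d, l', rfl⟩ : ∃ d l', l2 = d :: l' := by
    cases l2 with
    | nil => simp at hlen
    | cons d l' => exact ⟨d, l', rfl⟩
  rw [uSeq_cons₂, uSeq_cons₂] at h
  have hne1 : uSeq (c :: l) ≠ e1 := uSeq_ne_e1 h2
  have hne2 : uSeq (d :: l') ≠ e1 := uSeq_ne_e1 (by omega)
  cases a <;> cases b <;> simp only [if_true, if_false, Bool.false_eq_true, ite_true, ite_false] at h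
  · exact ⟨rfl, (magma_mul_inj h).1⟩
  · exact absurd (magma_mul_inj h).1 hne1
  · exact absurd (magma_mul_inj h).1.symm hne2
  · exact ⟨rfl, (magma_mul_inj h).2⟩

lemma uSeq_inj_getD : ∀ (l1 l2 : List Bool), l1.length = l2.length → uSeq l1 = uSeq l2 →
    ∀ k, k + 2 < l1.length → l1.getD k false = l2.getD k false := by
  intro l1
  induction l1 with
  | nil => intro l2 _ _ k hk; simp at hk
  | cons a l ihl =>
    intro l2 hlen h k hk
    obtain ⟨b, l', rfl⟩ : ∃ b l', l2 = b :: l' := by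
      cases l2 with
      | nil => simp at hlen
      | cons b l' => exact ⟨b, l', rfl⟩
    have h2 : 2 ≤ l.length := by
      simp only [List.length_cons] at hk; omega
    obtain ⟨hab, htail⟩ := uSeq_cons_inj (by simpa using hlen) h2 h
    cases k with
    | zero => simpa [hab]
    | succ k' =>
      simp only [List.getD_cons_succ]
      exact ihl l' (by simpa using hlen) htail k'
        (by simp only [List.length_cons] at hk; omega)

lemma uSeq_rList_inj {L : ℕ} {r s : ℕ → Bool}
    (h : uSeq (rList r L) = uSeq (rList s L)) {k : ℕ} (hk : k + 2 < L) : r k = s k := by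
  have hg := uSeq_inj_getD (rList r L) (rList s L)
    (by rw [rList_length, rList_length]) h k (by rwa [rList_length])
  rwa [rList_getD (by omega), rList_getD (by omega)] at hg

/-- The terminal-block extractor. -/
noncomputable def psiT : 𝕋 → 𝕋
  | FreeMagma.of _ => e1
  | FreeMagma.mul a b => if ll a b then psiT b else FreeMagma.mul a b

lemma psiT_mul (a b : 𝕋) : psiT (a * b) = if ll a b then psiT b else a * b := rfl

lemma psiT_e1ish (u : Unit) : psiT (FreeMagma.of u) = e1 := rfl

/-- The "r-coherent" sets `E_r`. -/
def ES (s : ℕ → Bool) : Set 𝕋 := {u | psiT u = uSeq (rList s (cnt (psiT u)))}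

/-- The correlation witness set `D`. -/
def Dset : Set 𝕋 :=
  {u | ∃ a b : 𝕋, u = a * b ∧ ll a b ∧ ∃ r : ℕ → Bool, a ∈ ES r ∧ b ∈ ES r}

lemma two_dvd_of_ll {a b : 𝕋} (h : ll a b) : 2 ∣ cnt b := by
  obtain ⟨p, hap, hpb⟩ := h
  have hp : p ≠ 0 := by
    intro h0
    subst h0
    have := cnt_pos a
    simp at hap
    omega
  exact dvd_trans (dvd_pow_self 2 hp) hpb

lemma dvd_cnt_psiT : ∀ (t : 𝕋) (q : ℕ), 2 ^ q ∣ cnt t → 2 ^ q ∣ cnt (psiT t)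
  | FreeMagma.of _, q, h => h
  | FreeMagma.mul a b, q, h => by
    by_cases hl : ll a b
    · obtain ⟨p, hap, hpb⟩ := hl
      have hqb : 2 ^ q ∣ cnt b := by
        by_cases hpq : q ≤ p
        · exact dvd_trans (pow_dvd_pow 2 hpq) hpb
        · exfalso
          have h2 : (2 : ℕ) ^ p ∣ cnt a + cnt b :=
            dvd_trans (pow_dvd_pow 2 (by omega)) h
          have h3 : (2 : ℕ) ^ p ∣ cnt a := (Nat.dvd_add_right hpb).mp (by
            rwa [add_comm] at h2)
          have := Nat.le_of_dvd (cnt_pos a) h3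
          omega
      have hrec := dvd_cnt_psiT b q hqb
      have hll : ll a b := ⟨p, hap, hpb⟩
      simpa [psiT_mul, hll] using hrec
    · simpa [psiT_mul, hl] using h

lemma cnt_hr (r : ℕ → Bool) : ∀ t : 𝕋, cnt (hr r t) = cnt t
  | FreeMagma.of _ => by
    simp [hr, rList_one]
    rfl
  | FreeMagma.mul a b => by
    by_cases hl : ll a b
    · simp [hr, hl, cnt_mul', cnt_hr r a, cnt_hr r b]
    · have h1 : 1 ≤ (rList r (cnt a + cnt b)).length := by
        rw [rList_length]
        have := cnt_pos a
        omega
      simp [hr, hl, cnt_uSeq _ h1, rList_length, cnt_mul']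

lemma ll_hr {a b : 𝕋} (r : ℕ → Bool) (h : ll a b) : ll (hr r a) (hr r b) := by
  obtain ⟨p, hap, hpb⟩ := h
  exact ⟨p, by rwa [cnt_hr], by rwa [cnt_hr]⟩

lemma psiT_uSeq_even : ∀ σ : List Bool, 2 ≤ σ.length → σ.length % 2 = 0 →
    psiT (uSeq σ) = uSeq σ
  | b :: c :: l, _, he => by
    have hcnt : cnt (uSeq (c :: l)) = l.length + 1 := by
      rw [cnt_uSeq _ (by simp)]
      simp
    have hlen2 : (b :: c :: l).length = l.length + 2 := by simp
    have hodd : l.length % 2 = 0 := by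
      rw [hlen2] at he
      omega
    cases b
    · rw [uSeq_cons₂]
      simp only [Bool.false_eq_true, if_false]
      rw [psiT_mul]
      rw [if_neg]
      intro hll
      obtain ⟨p, h1, h2⟩ := hll
      rw [cnt_e1'] at h2
      have hp1 : (2:ℕ) ^ p = 1 := Nat.dvd_one.mp h2
      rw [hp1] at h1
      have := cnt_pos (uSeq (c :: l))
      omega
    · rw [uSeq_cons₂]
      simp only [if_true]
      rw [psiT_mul]
      rw [if_neg]
      intro hll
      obtain ⟨p, h1, h2⟩ := hll
      rw [cnt_e1'] at h1
      have hp : p ≠ 0 := by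
        intro h0; subst h0; simp at h1
      have h2' : 2 ∣ cnt (uSeq (c :: l)) := dvd_trans (dvd_pow_self 2 hp) h2
      rw [hcnt] at h2'
      omega

lemma psiT_hr (r : ℕ → Bool) : ∀ t : 𝕋, 2 ∣ cnt t →
    psiT (hr r t) = uSeq (rList r (cnt (psiT t)))
  | FreeMagma.of _, h => by
    exfalso
    rw [show cnt (FreeMagma.of () : 𝕋) = 1 from rfl] at h
    omega
  | FreeMagma.mul a b, h => by
    by_cases hl : ll a b
    · have hlr := ll_hr r hl
      have h2b : 2 ∣ cnt b := two_dvd_of_ll hl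
      have hrec := psiT_hr r b h2b
      have h1 : hr r (FreeMagma.mul a b) = hr r a * hr r b := by
        simp [hr, hl]
      rw [h1]
      rw [psiT_mul, if_pos hlr, hrec]
      have h2 : psiT (FreeMagma.mul a b) = psiT b := by
        rw [show (FreeMagma.mul a b : 𝕋) = a * b from rfl, psiT_mul, if_pos hl]
      rw [h2]
    · have hcab : cnt (FreeMagma.mul a b : 𝕋) = cnt a + cnt b := rfl
      have h1 : hr r (FreeMagma.mul a b) = uSeq (rList r (cnt a + cnt b)) := by
        simp [hr, hl]
      have h2 : psiT (FreeMagma.mul a b) = FreeMagma.mul a b := by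
        rw [show (FreeMagma.mul a b : 𝕋) = a * b from rfl, psiT_mul, if_neg hl]
      have hge : 2 ≤ cnt a + cnt b := by
        have := cnt_pos a; have := cnt_pos b; omega
      have heven : (cnt a + cnt b) % 2 = 0 := by
        rw [hcab] at h
        omega
      rw [h1, h2, hcab]
      exact psiT_uSeq_even _ (by rw [rList_length]; omega)
        (by rw [rList_length]; omega)

lemma cnt_psiT_hr {r : ℕ → Bool} {t : 𝕋} (h : 2 ∣ cnt t) :
    cnt (psiT (hr r t)) = cnt (psiT t) := by
  rw [psiT_hr r t h, cnt_uSeq _ (by rw [rList_length]; exact cnt_pos _)]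
  exact rList_length _ _

lemma hr_mem_ES {s : ℕ → Bool} {t : 𝕋} (h : 2 ∣ cnt t) : hr s t ∈ ES s := by
  show psiT (hr s t) = uSeq (rList s (cnt (psiT (hr s t))))
  rw [cnt_psiT_hr h]
  exact psiT_hr s t h

lemma hr_not_mem_ES {r s : ℕ → Bool} {k : ℕ} {t : 𝕋} (hne : r k ≠ s k)
    (h2 : 2 ∣ cnt t) (hk : k + 2 < cnt (psiT t)) : hr r t ∉ ES s := by
  intro hmem
  have hmem' : psiT (hr r t) = uSeq (rList s (cnt (psiT (hr r t)))) := hmem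
  rw [cnt_psiT_hr h2, psiT_hr r t h2] at hmem'
  exact hne (uSeq_rList_inj hmem' hk)

lemma ES_congr {x : 𝕋} {r s : ℕ → Bool} (h : ∀ i, i < cnt (psiT x) → r i = s i) :
    x ∈ ES r ↔ x ∈ ES s := by
  show psiT x = uSeq (rList r (cnt (psiT x))) ↔ psiT x = uSeq (rList s (cnt (psiT x)))
  rw [rList_congr h]

end AuxiliaryCombinatorics

section MeasureToolkit

noncomputable def bnd (f : Bdd 𝕋) : ℝ := Classical.choose f.2

lemma bnd_spec (f : Bdd 𝕋) : ∀ t, |f.1 t| ≤ bnd f := Classical.choose_spec f.2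

lemma bnd_nonneg (f : Bdd 𝕋) : 0 ≤ bnd f :=
  le_trans (abs_nonneg _) (bnd_spec f e1)

lemma liftBdd_val {g : 𝕋 → ℝ} (h : ∃ M, ∀ t, |g t| ≤ M) : (liftBdd g).1 = g := by
  have e : liftBdd g = (⟨g, h⟩ : Bdd 𝕋) := dif_pos h
  rw [e]

lemma indB_val (E : Set 𝕋) : (indB E).1 = fun t => if t ∈ E then (1 : ℝ) else 0 := by
  apply liftBdd_val
  exact ⟨1, fun t => by split <;> simp⟩

lemma indB_abs (E : Set 𝕋) : ∀ t, |(indB E).1 t| ≤ 1 := by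
  intro t
  rw [indB_val]
  simp only
  split <;> simp

variable {φ : Bdd 𝕋 → ℝ}

lemma pr_eq (f g : Bdd 𝕋) (h : ∀ t, f.1 t = g.1 t) : φ f = φ g := by
  have : f = g := Subtype.ext (funext h)
  rw [this]

lemma pr_mono (hφ : φ ∈ PrSet 𝕋) (f g : Bdd 𝕋) (h : ∀ t, f.1 t ≤ g.1 t) :
    φ f ≤ φ g := by
  have hb : ∃ M, ∀ t, |g.1 t - f.1 t| ≤ M := by
    refine ⟨bnd g + bnd f, fun t => ?_⟩
    have h1 := abs_le.mp (bnd_spec f t)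
    have h2 := abs_le.mp (bnd_spec g t)
    rw [abs_le]
    constructor <;> linarith
  have hadd := hφ.1 f ⟨fun t => g.1 t - f.1 t, hb⟩ g (fun s => by simp)
  have hpos := hφ.2.2.1 ⟨fun t => g.1 t - f.1 t, hb⟩ (fun s => by
    simp only
    linarith [h s])
  linarith

lemma pr_const (hφ : φ ∈ PrSet 𝕋) (c : ℝ) : φ (constB 𝕋 c) = c := by
  have h := hφ.2.1 c (constB 𝕋 1) (constB 𝕋 c) (fun s => by simp [constB])
  rw [h, hφ.2.2.2, mul_one]

lemma pr_abs (hφ : φ ∈ PrSet 𝕋) (f : Bdd 𝕋) (M : ℝ) (h : ∀ t, |f.1 t| ≤ M) :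
    |φ f| ≤ M := by
  rw [abs_le]
  constructor
  · have hm := pr_mono hφ (constB 𝕋 (-M)) f (fun t => by
      have := abs_le.mp (h t)
      simpa [constB] using this.1)
    rwa [pr_const hφ] at hm
  · have hm := pr_mono hφ f (constB 𝕋 M) (fun t => by
      have := abs_le.mp (h t)
      simpa [constB] using this.2)
    rwa [pr_const hφ] at hm

lemma pr_compl (hφ : φ ∈ PrSet 𝕋) {S : Set 𝕋} (hS : φ (indB S) = 1) :
    φ (indB Sᶜ) = 0 := by
  have hadd := hφ.1 (indB S) (indB Sᶜ) (constB 𝕋 1) (fun s => by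
    rw [indB_val, indB_val]
    by_cases hs : s ∈ S <;> simp [constB, hs])
  rw [pr_const hφ, hS] at hadd
  linarith

lemma pr_ae_le (hφ : φ ∈ PrSet 𝕋) {S : Set 𝕋} (hS : φ (indB S) = 1)
    (f g : Bdd 𝕋) (h : ∀ t ∈ S, f.1 t ≤ g.1 t) : φ f ≤ φ g := by
  have hc := pr_compl hφ hS
  set K := bnd f + bnd g with hK
  have hwb : ∃ M, ∀ t, |K * (indB Sᶜ).1 t| ≤ M := by
    refine ⟨|K|, fun t => ?_⟩
    rw [abs_mul]
    have := indB_abs Sᶜ t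
    nlinarith [abs_nonneg K]
  set w : Bdd 𝕋 := ⟨fun t => K * (indB Sᶜ).1 t, hwb⟩ with hw
  have hφw : φ w = 0 := by
    have := hφ.2.1 K (indB Sᶜ) w (fun s => rfl)
    rw [this, hc, mul_zero]
  have hub : ∃ M, ∀ t, |g.1 t + w.1 t| ≤ M := by
    refine ⟨bnd g + |K|, fun t => ?_⟩
    have h1 := abs_le.mp (bnd_spec g t)
    have h2 : |w.1 t| ≤ |K| := by
      show |K * (indB Sᶜ).1 t| ≤ |K|
      rw [abs_mul]
      have := indB_abs Sᶜ t
      nlinarith [abs_nonneg K]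
    have h2' := abs_le.mp h2
    rw [abs_le]
    constructor <;> linarith
  set u : Bdd 𝕋 := ⟨fun t => g.1 t + w.1 t, hub⟩ with hu
  have hφu : φ u = φ g := by
    have := hφ.1 g w u (fun s => rfl)
    rw [this, hφw, add_zero]
  have hfu : φ f ≤ φ u := by
    apply pr_mono hφ
    intro t
    show f.1 t ≤ g.1 t + K * (indB Sᶜ).1 t
    by_cases ht : t ∈ S
    · have : (indB Sᶜ).1 t = 0 := by rw [indB_val]; simp [ht]
      rw [this, mul_zero, add_zero]
      exact h t ht
    · have : (indB Sᶜ).1 t = 1 := by rw [indB_val]; simp [ht]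
      rw [this, mul_one]
      have h1 := abs_le.mp (bnd_spec f t)
      have h2 := abs_le.mp (bnd_spec g t)
      rw [hK]
      linarith
  linarith [hφu, hfu]

lemma pr_ae_eq (hφ : φ ∈ PrSet 𝕋) {S : Set 𝕋} (hS : φ (indB S) = 1)
    (f g : Bdd 𝕋) (h : ∀ t ∈ S, f.1 t = g.1 t) : φ f = φ g :=
  le_antisymm (pr_ae_le hφ hS f g (fun t ht => (h t ht).le))
    (pr_ae_le hφ hS g f (fun t ht => (h t ht).ge))

lemma pr_ae_const (hφ : φ ∈ PrSet 𝕋) {S : Set 𝕋} (hS : φ (indB S) = 1)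
    (f : Bdd 𝕋) (c : ℝ) (h : ∀ t ∈ S, f.1 t = c) : φ f = c := by
  have := pr_ae_eq hφ hS f (constB 𝕋 c) (fun t ht => by simpa [constB] using h t ht)
  rwa [pr_const hφ] at this

end MeasureToolkit

section UltrafilterFacts

lemma addU_mem {U V : Ultrafilter ℕ} {A : Set ℕ} :
    A ∈ addU U V ↔ {m | {n | m + n ∈ A} ∈ V} ∈ U := by
  change A ∈ Filter.bind (↑U) (fun m => ↑(V.map fun n => m + n)) ↔ _
  rw [Filter.mem_bind']
  rfl

lemma U_dvd (U : Ultrafilter ℕ) (hU : addU U U = U) (p : ℕ) :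
    {j : ℕ | 2 ^ p ∣ j} ∈ U := by
  set n := 2 ^ p with hn
  have hn0 : 0 < n := Nat.pow_pos (by norm_num)
  have hfin : ({x : ℕ | x < n}).Finite := Set.finite_Iio n
  have hmem : {x : ℕ | x < n} ∈ U.map (· % n) := by
    rw [Ultrafilter.mem_map]
    have : (· % n) ⁻¹' {x : ℕ | x < n} = Set.univ := by
      ext j
      simp [Nat.mod_lt _ hn0]
    rw [this]
    exact Filter.univ_mem
  obtain ⟨c, hc, hVc⟩ := Ultrafilter.eq_pure_of_finite_mem hfin hmem
  have hcn : c < n := hc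
  have hA : {j : ℕ | j % n = c} ∈ U := by
    have h1 : {c} ∈ U.map (· % n) := by
      rw [hVc]
      exact Ultrafilter.mem_pure.mpr rfl
    rw [Ultrafilter.mem_map] at h1
    have : (· % n) ⁻¹' {c} = {j : ℕ | j % n = c} := by
      ext j; simp
    rwa [this] at h1
  have hA' : {j : ℕ | j % n = c} ∈ addU U U := by rw [hU]; exact hA
  rw [addU_mem] at hA'
  obtain ⟨m, hm1, hm2⟩ := Ultrafilter.nonempty_of_mem (Filter.inter_mem hA hA')
  obtain ⟨k, hk1, hk2⟩ := Ultrafilter.nonempty_of_mem (Filter.inter_mem hA hm2)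
  have hmk : (m + k) % n = c := hk2
  have hc0 : c = 0 := by
    have hm1' : m % n = c := hm1
    have hk1' : k % n = c := hk1
    have hmod : (c + c) % n = c := by
      have h5 : (m % n + k % n) % n = c := by
        rw [← Nat.add_mod]
        exact hmk
      rwa [hm1', hk1'] at h5
    have hdm := Nat.div_add_mod (c + c) n
    rw [hmod] at hdm
    set q := (c + c) / n with hq
    have hcq : n * q = c := by omega
    rcases Nat.eq_zero_or_pos q with h0 | h1
    · rw [h0, Nat.mul_zero] at hcq; exact hcq.symm
    · exfalso
      have : n ≤ n * q := Nat.le_mul_of_pos_right n h1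
      omega
  have hset : {j : ℕ | j % n = c} = {j : ℕ | 2 ^ p ∣ j} := by
    ext j
    rw [hc0]
    simp [hn, Nat.dvd_iff_mod_eq_zero]
  rwa [hset] at hA

lemma U_ne_pure (U : Ultrafilter ℕ) (hU : addU U U = U)
    (hex : ∃ μ ∈ AU U, hmul μ μ = μ) : ∀ a : ℕ, U ≠ pure a := by
  intro a ha
  have haa : a + a = a := by
    have h1 : {a + a} ∈ addU U U := by
      rw [addU_mem, ha]
      rw [Ultrafilter.mem_pure]
      simp only [Set.mem_setOf_eq]
      exact Ultrafilter.mem_pure.mpr rfl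
    rw [hU, ha] at h1
    exact (Ultrafilter.mem_pure.mp h1).symm
  have ha0 : a = 0 := by omega
  subst ha0
  obtain ⟨μ, ⟨hPr, hlim⟩, _⟩ := hex
  have h2 := hlim Set.univ isOpen_univ (Set.mem_univ μ)
  rw [ha] at h2
  have h3 : (Set.univ ∩ Asets 0).Nonempty := Ultrafilter.mem_pure.mp h2
  obtain ⟨ψ, _, F, w, hcnt, _, hw1, _⟩ := h3
  have hF : F = ∅ := by
    rcases Finset.eq_empty_or_nonempty F with h | ⟨t, ht⟩
    · exact h
    · exfalso
      have := hcnt t ht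
      have := cnt_pos t
      omega
  rw [hF, Finset.sum_empty] at hw1
  norm_num at hw1

lemma U_cofinite (U : Ultrafilter ℕ) (hU : addU U U = U)
    (hex : ∃ μ ∈ AU U, hmul μ μ = μ) (N : ℕ) : {j : ℕ | N ≤ j} ∈ U := by
  by_contra h
  have hc : {j : ℕ | N ≤ j}ᶜ ∈ U := Ultrafilter.compl_mem_iff_notMem.mpr h
  have hfin : ({j : ℕ | N ≤ j}ᶜ).Finite := by
    have : {j : ℕ | N ≤ j}ᶜ = {j : ℕ | j < N} := by
      ext j; simp
    rw [this]
    exact Set.finite_Iio N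
  obtain ⟨a, _, ha⟩ := Ultrafilter.eq_pure_of_finite_mem hfin hc
  exact U_ne_pure U hU hex a ha

end UltrafilterFacts

section AUandPushforward

lemma hmul_apply (φ ψ : Bdd 𝕋 → ℝ) (f : Bdd 𝕋) :
    hmul φ ψ f = φ (liftBdd fun x => ψ (liftBdd fun y => f.1 (x * y))) := rfl

lemma hrM_apply (r : ℕ → Bool) (φ : Bdd 𝕋 → ℝ) (f : Bdd 𝕋) :
    hrM r φ f = φ (liftBdd fun t => f.1 (hr r t)) := rfl

lemma AU_cnt {U : Ultrafilter ℕ} {μ : Bdd 𝕋 → ℝ} (hμ : μ ∈ AU U) {A : Set ℕ}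
    (hA : A ∈ U) : μ (indB {t : 𝕋 | cnt t ∈ A}) = 1 := by
  obtain ⟨hPr, hlim⟩ := hμ
  by_contra hne
  have hle : μ (indB {t : 𝕋 | cnt t ∈ A}) ≤ 1 := by
    have h := pr_mono hPr (indB {t : 𝕋 | cnt t ∈ A}) (constB 𝕋 1) (fun t => by
      rw [indB_val]
      simp only [constB]
      split <;> norm_num)
    rwa [pr_const hPr] at h
  have hlt : μ (indB {t : 𝕋 | cnt t ∈ A}) < 1 := lt_of_le_of_ne hle hne
  set W : Set (Bdd 𝕋 → ℝ) := (fun ψ : Bdd 𝕋 → ℝ => ψ (indB {t : 𝕋 | cnt t ∈ A})) ⁻¹'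
    (Set.Iio 1) with hW
  have hWopen : IsOpen W := IsOpen.preimage (continuous_apply _) isOpen_Iio
  have hB := hlim W hWopen hlt
  obtain ⟨m, hm1, hm2⟩ := Ultrafilter.nonempty_of_mem (Filter.inter_mem hB hA)
  obtain ⟨ψ, hψW, F, w, hcnt, hw0, hw1, hrep⟩ := hm1
  have hψ1 : ψ (indB {t : 𝕋 | cnt t ∈ A}) = 1 := by
    rw [hrep]
    have hterm : ∀ t ∈ F, w t * (indB {t : 𝕋 | cnt t ∈ A}).1 t = w t := by
      intro t ht
      rw [indB_val]
      have : cnt t ∈ A := by rw [hcnt t ht]; exact hm2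
      simp [this]
    rw [Finset.sum_congr rfl hterm, hw1]
  have hlt2 : ψ (indB {t : 𝕋 | cnt t ∈ A}) < 1 := hψW
  linarith

lemma AU_cnt_dvd {U : Ultrafilter ℕ} (hU : addU U U = U) {μ : Bdd 𝕋 → ℝ}
    (hμ : μ ∈ AU U) (q : ℕ) : μ (indB {t : 𝕋 | 2 ^ q ∣ cnt t}) = 1 :=
  AU_cnt hμ (U_dvd U hU q)

lemma hrM_mem_PrSet (r : ℕ → Bool) {μ : Bdd 𝕋 → ℝ} (hμ : μ ∈ PrSet 𝕋) :
    hrM r μ ∈ PrSet 𝕋 := by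
  have hlift : ∀ f : Bdd 𝕋, (liftBdd fun t => f.1 (hr r t)).1 = fun t => f.1 (hr r t) :=
    fun f => liftBdd_val ⟨bnd f, fun t => bnd_spec f _⟩
  refine ⟨?_, ?_, ?_, ?_⟩
  · intro f g h hsum
    exact hμ.1 _ _ _ (fun s => by rw [hlift f, hlift g, hlift h]; exact hsum (hr r s))
  · intro c f g hmul'
    exact hμ.2.1 c _ _ (fun s => by rw [hlift f, hlift g]; exact hmul' (hr r s))
  · intro f hf
    exact hμ.2.2.1 _ (fun s => by rw [hlift f]; exact hf (hr r s))
  · rw [hrM_apply]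
    have h2 : μ (liftBdd fun t => (constB 𝕋 1).1 (hr r t)) = μ (constB 𝕋 1) :=
      pr_eq _ _ (fun t => by rw [hlift (constB 𝕋 1)]; rfl)
    rw [h2, hμ.2.2.2]

lemma hrM_Asets (r : ℕ → Bool) {ψ : Bdd 𝕋 → ℝ} {m : ℕ} (h : ψ ∈ Asets m) :
    hrM r ψ ∈ Asets m := by
  obtain ⟨F, w, hcnt, hw0, hw1, hrep⟩ := h
  classical
  refine ⟨F.image (hr r), fun u => ∑ t ∈ F.filter (fun t' => hr r t' = u), w t,
    ?_, ?_, ?_, ?_⟩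
  · intro u hu
    obtain ⟨t, ht, rfl⟩ := Finset.mem_image.mp hu
    rw [cnt_hr]
    exact hcnt t ht
  · intro u _
    exact Finset.sum_nonneg (fun t ht => hw0 t (Finset.mem_filter.mp ht).1)
  · rw [Finset.sum_fiberwise_of_maps_to (fun t ht => Finset.mem_image_of_mem _ ht) w]
    exact hw1
  · intro f
    rw [hrM_apply, hrep]
    have hlf : (liftBdd fun t => f.1 (hr r t)).1 = fun t => f.1 (hr r t) :=
      liftBdd_val ⟨bnd f, fun t => bnd_spec f _⟩
    have h1 : ∑ t ∈ F, w t * (liftBdd fun t => f.1 (hr r t)).1 t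
        = ∑ t ∈ F, w t * f.1 (hr r t) := by
      apply Finset.sum_congr rfl
      intro t _
      rw [hlf]
    rw [h1]
    rw [← Finset.sum_fiberwise_of_maps_to (fun t ht => Finset.mem_image_of_mem (hr r) ht)
      (fun t => w t * f.1 (hr r t))]
    apply Finset.sum_congr rfl
    intro u hu
    rw [Finset.sum_mul]
    apply Finset.sum_congr rfl
    intro t ht
    rw [(Finset.mem_filter.mp ht).2]

lemma hrM_mem_AU {U : Ultrafilter ℕ} (r : ℕ → Bool) {μ : Bdd 𝕋 → ℝ}
    (hμ : μ ∈ AU U) : hrM r μ ∈ AU U := by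
  obtain ⟨hPr, hlim⟩ := hμ
  refine ⟨hrM_mem_PrSet r hPr, ?_⟩
  intro W hW hmem
  have hcont : Continuous (hrM r) := by
    apply continuous_pi
    intro f
    exact continuous_apply _
  have hV := hlim ((hrM r) ⁻¹' W) (hW.preimage hcont) hmem
  apply Filter.mem_of_superset hV
  rintro m ⟨ψ, hψV, hψA⟩
  exact ⟨hrM r ψ, hψV, hrM_Asets r hψA⟩

end AUandPushforward

section KeyComputations

variable {φ : Bdd 𝕋 → ℝ}

lemma lift_congr {g h : 𝕋 → ℝ} (hgh : ∀ t, g t = h t) : liftBdd g = liftBdd h := by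
  have : g = h := funext hgh
  rw [this]

lemma pr_lift_abs (hφ : φ ∈ PrSet 𝕋) (g : 𝕋 → ℝ) (M : ℝ) (hM : ∀ t, |g t| ≤ M) :
    |φ (liftBdd g)| ≤ M := by
  apply pr_abs hφ
  intro t
  rw [liftBdd_val ⟨M, hM⟩]
  exact hM t

lemma pr_lift_ae_const (hφ : φ ∈ PrSet 𝕋) {S : Set 𝕋} (hS : φ (indB S) = 1)
    (g : 𝕋 → ℝ) (c M : ℝ) (hM : ∀ t, |g t| ≤ M) (h : ∀ t ∈ S, g t = c) :
    φ (liftBdd g) = c := by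
  apply pr_ae_const hφ hS
  intro t ht
  rw [liftBdd_val ⟨M, hM⟩]
  exact h t ht

lemma pr_lift_ae_eq (hφ : φ ∈ PrSet 𝕋) {S : Set 𝕋} (hS : φ (indB S) = 1)
    (g1 g2 : 𝕋 → ℝ) (M : ℝ) (hM1 : ∀ t, |g1 t| ≤ M) (hM2 : ∀ t, |g2 t| ≤ M)
    (h : ∀ t ∈ S, g1 t = g2 t) : φ (liftBdd g1) = φ (liftBdd g2) := by
  apply pr_ae_eq hφ hS
  intro t ht
  rw [liftBdd_val ⟨M, hM1⟩, liftBdd_val ⟨M, hM2⟩]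
  exact h t ht

lemma hr_mul_of_ll {r : ℕ → Bool} {x y : 𝕋} (h : ll x y) :
    hr r (x * y) = hr r x * hr r y := by
  show hr r (FreeMagma.mul x y) = hr r x * hr r y
  simp [hr, h]

lemma hrM_idem {U : Ultrafilter ℕ} (hU : addU U U = U) (r : ℕ → Bool)
    {μ : Bdd 𝕋 → ℝ} (hμ : μ ∈ AU U) (hid : hmul μ μ = μ) :
    hmul (hrM r μ) (hrM r μ) = hrM r μ := by
  have hPr := hμ.1
  funext f
  have hbin : ∀ x : 𝕋, (liftBdd fun y => f.1 (x * y)).1 = fun y => f.1 (x * y) :=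
    fun x => liftBdd_val ⟨bnd f, fun y => bnd_spec f _⟩
  set G : 𝕋 → ℝ := fun x => hrM r μ (liftBdd fun y => f.1 (x * y)) with hG
  have hGval : ∀ x : 𝕋, G x = μ (liftBdd fun u => f.1 (x * hr r u)) := by
    intro x
    show hrM r μ (liftBdd fun y => f.1 (x * y)) = _
    rw [hrM_apply]
    congr 1
    apply lift_congr
    intro u
    rw [hbin x]
  have hGb : ∀ x, |G x| ≤ bnd f := by
    intro x
    rw [hGval x]
    exact pr_lift_abs hPr _ _ (fun u => bnd_spec f _)
  have hLHS : hmul (hrM r μ) (hrM r μ) f = μ (liftBdd fun t => G (hr r t)) := by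
    rw [hmul_apply, hrM_apply]
    congr 1
    apply lift_congr
    intro t
    rw [liftBdd_val ⟨bnd f, hGb⟩]
  have hRHS : hrM r μ f = μ (liftBdd fun x => μ (liftBdd fun y => f.1 (hr r (x * y)))) := by
    rw [hrM_apply]
    conv_lhs => rw [← hid]
    rw [hmul_apply]
    congr 1
    apply lift_congr
    intro x
    congr 1
    apply lift_congr
    intro y
    rw [liftBdd_val ⟨bnd f, fun t => bnd_spec f _⟩]
  rw [hLHS, hRHS]
  congr 1
  apply lift_congr
  intro x
  rw [hGval (hr r x)]
  apply pr_lift_ae_eq hPr (AU_cnt_dvd hU hμ (cnt x)) _ _ (bnd f)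
    (fun u => bnd_spec f _) (fun y => bnd_spec f _)
  intro y hy
  have hll : ll x y := ⟨cnt x, Nat.lt_two_pow_self, hy⟩
  rw [hr_mul_of_ll hll]

lemma hrM_ES_self {U : Ultrafilter ℕ} (hU : addU U U = U) (s : ℕ → Bool)
    {μ : Bdd 𝕋 → ℝ} (hμ : μ ∈ AU U) : hrM s μ (indB (ES s)) = 1 := by
  have hPr := hμ.1
  rw [hrM_apply]
  have h2 : μ (indB {t : 𝕋 | 2 ^ 1 ∣ cnt t}) = 1 := AU_cnt_dvd hU hμ 1
  apply pr_lift_ae_const hPr h2 _ 1 1 (fun t => indB_abs _ _)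
  intro t ht
  have h2t : 2 ∣ cnt t := by
    have : (2 : ℕ) ^ 1 ∣ cnt t := ht
    simpa using this
  rw [indB_val]
  simp [hr_mem_ES h2t]

lemma hrM_ES_ne {U : Ultrafilter ℕ} (hU : addU U U = U) {r s : ℕ → Bool} {k : ℕ}
    (hk : r k ≠ s k) {μ : Bdd 𝕋 → ℝ} (hμ : μ ∈ AU U) :
    hrM r μ (indB (ES s)) = 0 := by
  have hPr := hμ.1
  rw [hrM_apply]
  apply pr_lift_ae_const hPr (AU_cnt_dvd hU hμ (k + 3)) _ 0 1 (fun t => indB_abs _ _)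
  intro t ht
  have hdt : (2 : ℕ) ^ (k + 3) ∣ cnt t := ht
  have h2t : 2 ∣ cnt t := dvd_trans (dvd_pow_self 2 (by omega)) hdt
  have hL : 2 ^ (k + 3) ≤ cnt (psiT t) :=
    Nat.le_of_dvd (cnt_pos _) (dvd_cnt_psiT t _ hdt)
  have hkL : k + 2 < cnt (psiT t) := by
    have h1 : k + 2 < 2 ^ (k + 2) := Nat.lt_two_pow_self
    have h2' : (2 : ℕ) ^ (k + 2) ≤ 2 ^ (k + 3) := Nat.pow_le_pow_right (by norm_num) (by omega)
    omega
  rw [indB_val]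
  simp [hr_not_mem_ES hk h2t hkL]

end KeyComputations

section DsetComputations

lemma inner_val {U : Ultrafilter ℕ} (hU : addU U U = U) {μ : Bdd 𝕋 → ℝ}
    (hμ : μ ∈ AU U) (x : 𝕋) (s : ℕ → Bool) :
    μ (liftBdd fun y => (indB Dset).1 (x * hr s y)) =
      if x ∈ ES s then 1 else 0 := by
  have hPr := hμ.1
  set q := cnt x + cnt (psiT x) + 3 with hq
  apply pr_lift_ae_const hPr (AU_cnt_dvd hU hμ q) _ _ 1 (fun y => indB_abs _ _)
  intro y hy
  have hcy : (2 : ℕ) ^ q ∣ cnt y := hy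
  have h2y : 2 ∣ cnt y := dvd_trans (dvd_pow_self 2 (by omega)) hcy
  have hqlt : q < 2 ^ q := Nat.lt_two_pow_self (n := q)
  have hcylarge : 2 ^ q ≤ cnt y := Nat.le_of_dvd (lt_of_lt_of_le (by omega) (cnt_pos y)) hcy
  have hll : ll x (hr s y) := ⟨q, by omega, by rwa [cnt_hr]⟩
  have hyES : hr s y ∈ ES s := hr_mem_ES h2y
  have hny : cnt (psiT x) + 3 ≤ cnt (psiT (hr s y)) := by
    rw [cnt_psiT_hr h2y]
    have hd := dvd_cnt_psiT y q hcy
    have := Nat.le_of_dvd (cnt_pos _) hd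
    omega
  rw [indB_val]
  by_cases hx : x ∈ ES s
  · simp only
    rw [if_pos hx, if_pos]
    exact ⟨x, hr s y, rfl, hll, s, hx, hyES⟩
  · simp only
    rw [if_neg hx, if_neg]
    intro hD
    obtain ⟨a, b, heq, hlab, r', ha, hb⟩ := hD
    obtain ⟨rfl, rfl⟩ := magma_mul_inj heq
    have hbeq : psiT (hr s y) = uSeq (rList r' (cnt (psiT (hr s y)))) := hb
    have hseq : psiT (hr s y) = uSeq (rList s (cnt (psiT (hr s y)))) := hyES
    have huu : uSeq (rList r' (cnt (psiT (hr s y)))) = uSeq (rList s (cnt (psiT (hr s y)))) :=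
      hbeq.symm.trans hseq
    have hagree : ∀ i, i < cnt (psiT x) → r' i = s i := by
      intro i hi
      exact uSeq_rList_inj huu (by omega)
    exact hx ((ES_congr hagree).mp ha)

lemma hrM_Dset {U : Ultrafilter ℕ} (hU : addU U U = U) (s : ℕ → Bool)
    {μ : Bdd 𝕋 → ℝ} (hμ : μ ∈ AU U) (hid : hmul μ μ = μ) :
    hrM s μ (indB Dset) = 1 := by
  have hPr := hμ.1
  rw [hrM_apply]
  have hF : (liftBdd fun t => (indB Dset).1 (hr s t)).1
      = fun t => (indB Dset).1 (hr s t) :=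
    liftBdd_val ⟨1, fun t => indB_abs _ _⟩
  conv_lhs => rw [← hid]
  rw [hmul_apply]
  have hinner : ∀ x : 𝕋, 2 ∣ cnt x →
      μ (liftBdd fun y => (liftBdd fun t => (indB Dset).1 (hr s t)).1 (x * y)) = 1 := by
    intro x hx
    have hstep : (liftBdd fun y => (liftBdd fun t => (indB Dset).1 (hr s t)).1 (x * y))
        = liftBdd fun y => (indB Dset).1 (hr s (x * y)) := by
      apply lift_congr
      intro y
      rw [hF]
    rw [hstep]
    apply pr_lift_ae_const hPr (AU_cnt_dvd hU hμ (cnt x + 1)) _ _ 1 (fun y => indB_abs _ _)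
    intro y hy
    have hcy : (2 : ℕ) ^ (cnt x + 1) ∣ cnt y := hy
    have h2y : 2 ∣ cnt y := dvd_trans (dvd_pow_self 2 (by omega)) hcy
    have hlt : cnt x < 2 ^ (cnt x + 1) := by
      have h1 := Nat.lt_two_pow_self (n := cnt x)
      have h2' : (2 : ℕ) ^ cnt x ≤ 2 ^ (cnt x + 1) :=
        Nat.pow_le_pow_right (by norm_num) (by omega)
      omega
    have hll : ll x y := ⟨cnt x + 1, hlt, hcy⟩
    have hmem : hr s (x * y) ∈ Dset := by
      rw [hr_mul_of_ll hll]
      exact ⟨hr s x, hr s y, rfl, ll_hr s hll, s, hr_mem_ES hx, hr_mem_ES h2y⟩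
    rw [indB_val]
    simp [hmem]
  have hob : ∀ x : 𝕋,
      |μ (liftBdd fun y => (liftBdd fun t => (indB Dset).1 (hr s t)).1 (x * y))| ≤ 1 := by
    intro x
    apply pr_lift_abs hPr
    intro y
    rw [hF]
    exact indB_abs _ _
  apply pr_lift_ae_const hPr (AU_cnt_dvd hU hμ 1) _ _ 1 hob
  intro x hx
  have h2x : 2 ∣ cnt x := by
    have h : (2 : ℕ) ^ 1 ∣ cnt x := hx
    simpa using h
  exact hinner x h2x

/-- Binary digits of `j`. -/
def sbF (j : ℕ) : ℕ → Bool := fun i => decide ((j / 2 ^ i) % 2 = 1)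

/-- The zero sequence. -/
def zbF : ℕ → Bool := fun _ => false

lemma sbF_false {j n i : ℕ} (hdvd : 2 ^ n ∣ j) (hi : i < n) : sbF j i = false := by
  rw [sbF]
  simp only [decide_eq_false_iff_not]
  intro hbit
  obtain ⟨m, rfl⟩ := hdvd
  have hdiv : 2 ^ n * m / 2 ^ i = 2 ^ (n - i) * m := by
    rw [show (2 : ℕ) ^ n = 2 ^ i * 2 ^ (n - i) by rw [← pow_add]; congr 1; omega]
    rw [mul_assoc, Nat.mul_div_cancel_left _ (Nat.pow_pos (by norm_num))]
  rw [hdiv] at hbit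
  have h2 : 2 ∣ 2 ^ (n - i) * m := Dvd.dvd.mul_right (dvd_pow_self 2 (by omega)) m
  omega

lemma sbF_log {j : ℕ} (hj : 1 ≤ j) : sbF j (Nat.log 2 j) = true := by
  rw [sbF]
  simp only [decide_eq_true_eq]
  have h1 : 2 ^ Nat.log 2 j ≤ j := Nat.pow_log_le_self 2 (by omega)
  have h2 : j < 2 ^ (Nat.log 2 j + 1) := Nat.lt_pow_succ_log_self (by norm_num) j
  have hpos : 0 < 2 ^ Nat.log 2 j := Nat.pow_pos (by norm_num)
  have h3 : j / 2 ^ Nat.log 2 j = 1 := by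
    have hlo : 1 ≤ j / 2 ^ Nat.log 2 j := (Nat.le_div_iff_mul_le hpos).mpr (by omega)
    have hhi : j / 2 ^ Nat.log 2 j < 2 := by
      rw [Nat.div_lt_iff_lt_mul hpos]
      rw [pow_succ] at h2
      omega
    omega
  rw [h3]

end DsetComputations
/-- Proposition 6.2: if `𝔸_U` contains an idempotent, then it
contains a family `(μ_r)_{r ∈ 2^ℕ}` of idempotents with sets `E_r` such that
`μ_r(E_s) = 1` iff `r = s` (else `0`); in particular the set of idempotents in
`𝔸_U` is not weak*-closed. -/
theorem idempotents_in_AU_continuum (U : Ultrafilter ℕ) (hU : addU U U = U)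
    (hex : ∃ μ ∈ AU U, hmul μ μ = μ) :
    (∃ (μ : (ℕ → Bool) → (Bdd 𝕋 → ℝ)) (E : (ℕ → Bool) → Set 𝕋),
      (∀ r, μ r ∈ AU U ∧ hmul (μ r) (μ r) = μ r) ∧
      (∀ r s, mE (μ r) (E s) = if r = s then 1 else 0)) ∧
    ¬ IsClosed {μ : Bdd 𝕋 → ℝ | μ ∈ AU U ∧ hmul μ μ = μ} := by
  obtain ⟨μ0, hμ0, hid0⟩ := hex
  have hPr0 : μ0 ∈ PrSet 𝕋 := hμ0.1
  constructor
  · -- the continuum family of idempotents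
    refine ⟨fun r => hrM r μ0, ES,
      fun r => ⟨hrM_mem_AU r hμ0, hrM_idem hU r hμ0 hid0⟩, ?_⟩
    intro r s
    by_cases hrs : r = s
    · subst hrs
      rw [if_pos rfl]
      exact hrM_ES_self hU r hμ0
    · rw [if_neg hrs]
      obtain ⟨k, hk⟩ := Function.ne_iff.mp hrs
      exact hrM_ES_ne hU hk hμ0
  · -- non-closedness
    intro hcl
    set G : ℕ → (Bdd 𝕋 → ℝ) := fun j => hrM (sbF j) μ0 with hG
    set K : Set (Bdd 𝕋 → ℝ) := Set.univ.pi (fun f => Set.Icc (-(bnd f)) (bnd f)) with hK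
    have hKc : IsCompact K := isCompact_univ_pi (fun f => isCompact_Icc)
    have hGK : ∀ j, G j ∈ K := by
      intro j
      rw [hK, Set.mem_univ_pi]
      intro f
      have h1 : |G j f| ≤ bnd f := by
        show |hrM (sbF j) μ0 f| ≤ bnd f
        rw [hrM_apply]
        exact pr_lift_abs hPr0 _ _ (fun t => bnd_spec f _)
      have h2 := abs_le.mp h1
      exact Set.mem_Icc.mpr ⟨h2.1, h2.2⟩
    have hle : ↑(U.map G) ≤ Filter.principal K := by
      rw [Filter.le_principal_iff]
      show K ∈ U.map G
      rw [Ultrafilter.mem_map]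
      exact Filter.univ_mem' hGK
    obtain ⟨ν, hνK, hνlim⟩ := hKc.ultrafilter_le_nhds (U.map G) hle
    have htendsto : Filter.Tendsto G ↑U (nhds ν) := by
      rw [Filter.Tendsto]
      rw [← Ultrafilter.coe_map]
      exact hνlim
    have hlimit : ∀ (f : Bdd 𝕋) (c : ℝ), {j : ℕ | G j f = c} ∈ U → ν f = c := by
      intro f c hc
      have h1' := Filter.Tendsto.comp ((continuous_apply f).tendsto ν) htendsto
      have h1 : Filter.Tendsto (fun j => G j f) ↑U (nhds (ν f)) := h1'
      have hev : (fun _ : ℕ => c) =ᶠ[↑U] fun j => G j f := by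
        filter_upwards [hc] with j hj
        exact hj.symm
      have h2 : Filter.Tendsto (fun j => G j f) ↑U (nhds c) :=
        Filter.Tendsto.congr' hev tendsto_const_nhds
      exact tendsto_nhds_unique h1 h2
    have hmemI : ν ∈ {μ : Bdd 𝕋 → ℝ | μ ∈ AU U ∧ hmul μ μ = μ} := by
      have hclosure : ν ∈ closure {μ : Bdd 𝕋 → ℝ | μ ∈ AU U ∧ hmul μ μ = μ} := by
        rw [mem_closure_iff_ultrafilter]
        refine ⟨U.map G, ?_, hνlim⟩
        rw [Ultrafilter.mem_map]
        apply Filter.univ_mem'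
        intro j
        show G j ∈ {μ : Bdd 𝕋 → ℝ | μ ∈ AU U ∧ hmul μ μ = μ}
        exact ⟨hrM_mem_AU _ hμ0, hrM_idem hU _ hμ0 hid0⟩
      rwa [hcl.closure_eq] at hclosure
    have hone : ν (indB Dset) = 1 := by
      apply hlimit
      apply Filter.univ_mem'
      intro j
      exact hrM_Dset hU (sbF j) hμ0 hid0
    have hinner : ∀ x : 𝕋, ν (liftBdd fun y => (indB Dset).1 (x * y)) =
        if x ∈ ES zbF then 1 else 0 := by
      intro x
      apply hlimit
      apply Filter.mem_of_superset (U_dvd U hU (cnt (psiT x)))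
      intro j hj
      have hj' : (2 : ℕ) ^ cnt (psiT x) ∣ j := hj
      show hrM (sbF j) μ0 (liftBdd fun y => (indB Dset).1 (x * y)) = _
      rw [hrM_apply]
      have hstep : (liftBdd fun t => (liftBdd fun y => (indB Dset).1 (x * y)).1 (hr (sbF j) t))
          = liftBdd fun t => (indB Dset).1 (x * hr (sbF j) t) := by
        apply lift_congr
        intro t
        rw [liftBdd_val ⟨1, fun y => indB_abs _ _⟩]
      rw [hstep, inner_val hU hμ0 x (sbF j)]
      have hiff : x ∈ ES (sbF j) ↔ x ∈ ES zbF :=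
        ES_congr (fun i hi => by rw [sbF_false hj' hi]; rfl)
      by_cases hxz : x ∈ ES zbF
      · rw [if_pos (hiff.mpr hxz), if_pos hxz]
      · rw [if_neg (fun hmm => hxz (hiff.mp hmm)), if_neg hxz]
    have hzero : ν (indB Dset) = 0 := by
      have hidν : hmul ν ν = ν := hmemI.2
      conv_lhs => rw [← hidν]
      rw [hmul_apply]
      have hstep : (liftBdd fun x => ν (liftBdd fun y => (indB Dset).1 (x * y)))
          = liftBdd fun x => if x ∈ ES zbF then (1 : ℝ) else 0 := by
        apply lift_congr
        intro x
        exact hinner x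
      rw [hstep]
      apply hlimit
      apply Filter.mem_of_superset (U_cofinite U hU ⟨μ0, hμ0, hid0⟩ 1)
      intro j hj
      have hj1 : 1 ≤ j := hj
      show hrM (sbF j) μ0 (liftBdd fun x => if x ∈ ES zbF then (1 : ℝ) else 0) = 0
      rw [hrM_apply]
      have hstep2 : (liftBdd fun t =>
            (liftBdd fun x => if x ∈ ES zbF then (1 : ℝ) else 0).1 (hr (sbF j) t))
          = liftBdd fun t => if hr (sbF j) t ∈ ES zbF then (1 : ℝ) else 0 := by
        apply lift_congr
        intro t
        rw [liftBdd_val ⟨1, fun x => by split <;> norm_num⟩]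
      rw [hstep2]
      apply pr_lift_ae_const hPr0 (AU_cnt_dvd hU hμ0 (Nat.log 2 j + 3)) _ _ 1
        (fun t => by split <;> norm_num)
      intro t ht
      have hdt : (2 : ℕ) ^ (Nat.log 2 j + 3) ∣ cnt t := ht
      have h2t : 2 ∣ cnt t := dvd_trans (dvd_pow_self 2 (by omega)) hdt
      have hL : 2 ^ (Nat.log 2 j + 3) ≤ cnt (psiT t) :=
        Nat.le_of_dvd (cnt_pos _) (dvd_cnt_psiT t _ hdt)
      have hkL : Nat.log 2 j + 2 < cnt (psiT t) := by
        have h1 : Nat.log 2 j + 2 < 2 ^ (Nat.log 2 j + 2) := Nat.lt_two_pow_self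
        have h2' : (2 : ℕ) ^ (Nat.log 2 j + 2) ≤ 2 ^ (Nat.log 2 j + 3) :=
          Nat.pow_le_pow_right (by norm_num) (by omega)
        omega
      have hnot : hr (sbF j) t ∉ ES zbF := by
        apply hr_not_mem_ES _ h2t hkL
        rw [sbF_log hj1]
        simp [zbF]
      simp [hnot]
    rw [hone] at hzero
    norm_num at hzero
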